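/- arXiv:1109.5834 — 2 statements merged into one kernel-verified Lean document; each statement's English description precedes it below -/
import Mathlib

section
/- Let I = I_{d;a_1,…,a_n} ⊆ S be the Veronese type ideal, generated by all monomials x^u with |u| = d and u(i) ≤ a_i, assuming 1 < d < Σ a_i and a_i ≥ 1 for all i. For a subset A ⊆ [n], the monomial prime P_A is an associated prime of S/I if and only if Σ_{i=1}^n a_i ≥ d - 1 + |A| and Σ_{i ∉ A} a_i ≤ d - 1. -/
open MvPolynomial

/-- The monomial prime ideal `P_A = (x_i : i ∈ A)`. -/
noncomputable def PF {K : Type} [Field K] {n : ℕ} (A : Finset (Fin n)) :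
    Ideal (MvPolynomial (Fin n) K) :=
  Ideal.span ((fun i => (X i : MvPolynomial (Fin n) K)) '' ↑A)

/-- The ideal of Veronese type `I_{d;a_1,…,a_n}`, generated by all monomials `x^u` with
`|u| = d` and `u(i) ≤ a_i` for all `i`. -/
noncomputable def veroneseIdeal (K : Type) [Field K] {n : ℕ} (d : ℕ) (a : Fin n → ℕ) :
    Ideal (MvPolynomial (Fin n) K) :=
  Ideal.span ((fun u : Fin n →₀ ℕ => (monomial u (1 : K) : MvPolynomial (Fin n) K)) ''
    {u | ∑ i, u i = d ∧ ∀ i, u i ≤ a i})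

namespace Stmt17Aux

variable {K : Type} [Field K] {n : ℕ}

lemma exists_le_sum_eq (m : Fin n → ℕ) (d : ℕ) (h : d ≤ ∑ i, m i) :
    ∃ s : Fin n → ℕ, (∀ i, s i ≤ m i) ∧ ∑ i, s i = d := by
  induction d with
  | zero => exact ⟨0, fun i => Nat.zero_le _, by simp⟩
  | succ d ih =>
    obtain ⟨s, hs, hsum⟩ := ih (Nat.le_of_succ_le h)
    have hex : ∃ i, s i < m i := by
      by_contra hc
      push_neg at hc
      have : ∑ i, m i ≤ ∑ i, s i := Finset.sum_le_sum fun i _ => hc i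
      omega
    obtain ⟨i, hi⟩ := hex
    refine ⟨Function.update s i (s i + 1), ?_, ?_⟩
    · intro j
      rcases eq_or_ne j i with rfl | hj
      · simpa using hi
      · simpa [Function.update_of_ne hj] using hs j
    · rw [Finset.sum_update_of_mem (Finset.mem_univ i)]
      rw [Finset.sdiff_singleton_eq_erase]
      have := Finset.add_sum_erase Finset.univ s (Finset.mem_univ i)
      omega

lemma exists_generator_le_iff (d : ℕ) (a : Fin n → ℕ) (u : Fin n →₀ ℕ) :
    (∃ s : Fin n →₀ ℕ, (∑ i, s i = d ∧ ∀ i, s i ≤ a i) ∧ s ≤ u) ↔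
      d ≤ ∑ i, min (u i) (a i) := by
  constructor
  · rintro ⟨s, ⟨hsum, hle⟩, hsu⟩
    rw [← hsum]
    exact Finset.sum_le_sum fun i _ => le_min (Finsupp.le_def.mp hsu i) (hle i)
  · intro h
    obtain ⟨s, hs, hsum⟩ := exists_le_sum_eq (fun i => min (u i) (a i)) d h
    refine ⟨Finsupp.equivFunOnFinite.symm s, ⟨by simpa using hsum,
      fun i => by simpa using (hs i).trans (min_le_right _ _)⟩,
      Finsupp.le_def.mpr fun i => by simpa using (hs i).trans (min_le_left _ _)⟩

lemma mem_vero_iff (d : ℕ) (a : Fin n → ℕ) (g : MvPolynomial (Fin n) K) :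
    g ∈ veroneseIdeal K d a ↔ ∀ u ∈ g.support, d ≤ ∑ i, min (u i) (a i) := by
  rw [veroneseIdeal, mem_ideal_span_monomial_image]
  exact forall₂_congr fun u _ => by
    simpa [Set.mem_setOf_eq] using exists_generator_le_iff d a u

lemma monomial_mem_vero (d : ℕ) (a : Fin n → ℕ) (u : Fin n →₀ ℕ) :
    (monomial u (1 : K) ∈ veroneseIdeal K d a) ↔ d ≤ ∑ i, min (u i) (a i) := by
  classical
  rw [mem_vero_iff, support_monomial]
  simp

lemma mem_PF_iff (A : Finset (Fin n)) (g : MvPolynomial (Fin n) K) :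
    g ∈ PF (K := K) A ↔ ∀ u ∈ g.support, ∃ i ∈ A, u i ≠ 0 := by
  rw [PF]
  have : ((fun i => (X i : MvPolynomial (Fin n) K)) '' ↑A) = X '' ↑A := rfl
  rw [this, mem_ideal_span_X_image]
  simp

lemma X_mem_PF {A : Finset (Fin n)} {i : Fin n} (hi : i ∈ A) :
    (X i : MvPolynomial (Fin n) K) ∈ PF (K := K) A :=
  Ideal.subset_span ⟨i, hi, rfl⟩

lemma PF_prime (A : Finset (Fin n)) : (PF (K := K) A).IsPrime := by
  classical
  set π := (aeval (fun i : Fin n => if i ∈ A then 0 else X i) :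
    MvPolynomial (Fin n) K →ₐ[K] MvPolynomial (Fin n) K) with hπ
  have key : ∀ g : MvPolynomial (Fin n) K, g - π g ∈ PF (K := K) A := by
    intro g
    induction g using MvPolynomial.induction_on with
    | C c => simp [hπ]
    | add p q hp hq =>
      have := Ideal.add_mem _ hp hq
      have heq : p + q - π (p + q) = (p - π p) + (q - π q) := by
        rw [map_add]; ring
      rwa [heq]
    | mul_X p i hp =>
      by_cases hi : i ∈ A
      · have heq : π (p * X i) = 0 := by
          rw [map_mul, hπ]; simp [aeval_X, if_pos hi]
        rw [heq, sub_zero]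
        exact Ideal.mul_mem_left _ p (X_mem_PF hi)
      · have heq : p * X i - π (p * X i) = (p - π p) * X i := by
          rw [map_mul, hπ]; simp only [aeval_X, if_neg hi]; ring
        rw [heq]
        exact Ideal.mul_mem_right _ _ hp
  have hker : PF (K := K) A = RingHom.ker π.toRingHom := by
    apply le_antisymm
    · rw [PF, Ideal.span_le]
      rintro _ ⟨i, hi, rfl⟩
      simp only [SetLike.mem_coe, RingHom.mem_ker, AlgHom.toRingHom_eq_coe,
        RingHom.coe_coe, hπ, aeval_X]
      rw [if_pos (by exact hi)]
    · intro g hg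
      have hg0 : π g = 0 := hg
      simpa [hg0] using key g
  rw [hker]
  exact RingHom.ker_isPrime _

lemma smul_mk {S : Type*} [CommRing S] (I : Ideal S) (r f : S) :
    r • (Ideal.Quotient.mk I f) = Ideal.Quotient.mk I (r * f) := rfl

end Stmt17Aux

/-- For a Veronese type ideal `I = I_{d;a_1,…,a_n}` with `1 < d < Σ aᵢ` and all `aᵢ ≥ 1`:
`P_A ∈ Ass(S/I)` iff `Σ aᵢ ≥ d - 1 + |A|` and `Σ_{i ∉ A} aᵢ ≤ d - 1`. -/
theorem stmt17 {K : Type} [Field K] {n : ℕ} (d : ℕ) (a : Fin n → ℕ)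
    (hd : 1 < d) (hlt : d < ∑ i, a i) (hone : ∀ i, 1 ≤ a i)
    (A : Finset (Fin n)) :
    PF (K := K) A ∈ associatedPrimes (MvPolynomial (Fin n) K)
        (MvPolynomial (Fin n) K ⧸ veroneseIdeal K d a) ↔
      d - 1 + A.card ≤ ∑ i, a i ∧ ∑ i ∈ Aᶜ, a i ≤ d - 1 := by
  classical
  constructor
  · intro hP
    obtain ⟨hprime, x, hx⟩ := isAssociatedPrime_iff.mp hP
    obtain ⟨f, rfl⟩ := Ideal.Quotient.mk_surjective x
    have hmem : ∀ r, r ∈ PF (K := K) A ↔ r * f ∈ veroneseIdeal K d a := by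
      intro r
      rw [hx, Submodule.mem_colon_singleton, Submodule.mem_bot, Stmt17Aux.smul_mk,
        Ideal.Quotient.eq_zero_iff_mem]
    set w : Fin n →₀ ℕ :=
      Finsupp.equivFunOnFinite.symm (fun j => if j ∈ A then 0 else a j) with hwdef
    have hw : ∀ j, w j = if j ∈ A then 0 else a j := fun j => rfl
    have hWA : (monomial w (1 : K)) ∉ PF (K := K) A := by
      rw [Stmt17Aux.mem_PF_iff]
      intro hcon
      obtain ⟨i, hi, hne⟩ := hcon w (by simp [support_monomial])
      exact hne (by rw [hw i, if_pos hi])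
    have hWf : monomial w (1 : K) * f ∉ veroneseIdeal K d a :=
      fun hc => hWA ((hmem _).mpr hc)
    rw [Stmt17Aux.mem_vero_iff] at hWf
    push_neg at hWf
    obtain ⟨u, hu, hud⟩ := hWf
    have hwu : ∀ j, w j ≤ u j := by
      have hsub := MvPolynomial.support_mul (monomial w (1 : K)) f hu
      rw [support_monomial, if_neg (one_ne_zero (α := K))] at hsub
      rw [Finset.mem_add] at hsub
      obtain ⟨b, hb, c, hc, hbc⟩ := hsub
      rw [Finset.mem_singleton] at hb
      subst hb
      intro j
      rw [← hbc, Finsupp.add_apply]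
      omega
    have hlow : ∀ i ∈ A, u i < a i ∧ d ≤ ∑ k, min (u k) (a k) + 1 := by
      intro i hi
      have hXf : X i * f ∈ veroneseIdeal K d a := (hmem (X i)).mp (Stmt17Aux.X_mem_PF hi)
      have hXWf : X i * (monomial w (1 : K) * f) ∈ veroneseIdeal K d a := by
        have := Ideal.mul_mem_left _ (monomial w (1 : K)) hXf
        rwa [show monomial w (1 : K) * (X i * f) = X i * (monomial w (1 : K) * f) by ring]
          at this
      have hsup : Finsupp.single i 1 + u ∈ (X i * (monomial w (1 : K) * f)).support := by
        rw [mem_support_iff, coeff_X_mul]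
        exact mem_support_iff.mp hu
      have hd2 : d ≤ ∑ k, min (((Finsupp.single i 1 + u : Fin n →₀ ℕ)) k) (a k) :=
        (Stmt17Aux.mem_vero_iff d a _).mp hXWf _ hsup
      by_cases hui : u i < a i
      · refine ⟨hui, le_trans hd2 ?_⟩
        have hpt : ∀ k, min (((Finsupp.single i 1 + u : Fin n →₀ ℕ)) k) (a k) ≤
            min (u k) (a k) + (if k = i then 1 else 0) := by
          intro k
          rw [Finsupp.add_apply, Finsupp.single_apply]
          split <;> [skip; skip] <;> split <;> omega
        calc ∑ k, min (((Finsupp.single i 1 + u : Fin n →₀ ℕ)) k) (a k)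
            ≤ ∑ k, (min (u k) (a k) + if k = i then 1 else 0) :=
              Finset.sum_le_sum fun k _ => hpt k
          _ = (∑ k, min (u k) (a k)) + 1 := by
              rw [Finset.sum_add_distrib, Finset.sum_ite_eq' Finset.univ i fun _ => 1]
              simp
      · exfalso
        have hpt : ∀ k, min (((Finsupp.single i 1 + u : Fin n →₀ ℕ)) k) (a k) ≤ min (u k) (a k) := by
          intro k
          rw [Finsupp.add_apply, Finsupp.single_apply]
          rcases eq_or_ne i k with rfl | hk
          · simp only [if_pos rfl]; omega
          · simp only [if_neg hk]; omega
        have hsum := Finset.sum_le_sum (s := Finset.univ) fun k _ => hpt k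
        omega
    have hAcmin : ∀ j ∈ Aᶜ, min (u j) (a j) = a j := by
      intro j hj
      have := hwu j
      rw [hw j, if_neg (Finset.mem_compl.mp hj)] at this
      omega
    have hsumAc : ∑ j ∈ Aᶜ, a j ≤ ∑ k, min (u k) (a k) := by
      calc ∑ j ∈ Aᶜ, a j = ∑ j ∈ Aᶜ, min (u j) (a j) :=
            (Finset.sum_congr rfl hAcmin).symm
        _ ≤ ∑ k, min (u k) (a k) :=
            Finset.sum_le_sum_of_subset (Finset.subset_univ _)
    constructor
    · rcases Finset.eq_empty_or_nonempty A with rfl | ⟨i0, hi0⟩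
      · simp only [Finset.card_empty, add_zero]
        omega
      · have h1 := (hlow i0 hi0).2
        have hA : ∀ i ∈ A, min (u i) (a i) + 1 ≤ a i := fun i hi => by
          have := (hlow i hi).1; omega
        have e1 : ∑ k ∈ A, min (u k) (a k) + A.card ≤ ∑ k ∈ A, a k := by
          calc ∑ k ∈ A, min (u k) (a k) + A.card
              = ∑ k ∈ A, (min (u k) (a k) + 1) := by
                rw [Finset.sum_add_distrib, Finset.sum_const, smul_eq_mul, mul_one]
            _ ≤ ∑ k ∈ A, a k := Finset.sum_le_sum hA
        have e2 : ∑ k ∈ Aᶜ, min (u k) (a k) = ∑ k ∈ Aᶜ, a k := Finset.sum_congr rfl hAcmin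
        have split1 : ∑ k ∈ A, min (u k) (a k) + ∑ k ∈ Aᶜ, min (u k) (a k)
            = ∑ k, min (u k) (a k) := Finset.sum_add_sum_compl A _
        have split2 : ∑ k ∈ A, a k + ∑ k ∈ Aᶜ, a k = ∑ k, a k :=
          Finset.sum_add_sum_compl A (fun i => a i)
        omega
    · omega
  · rintro ⟨h1, h2⟩
    obtain ⟨t, ht⟩ : ∃ t, t + ∑ j ∈ Aᶜ, a j = d - 1 :=
      ⟨d - 1 - ∑ j ∈ Aᶜ, a j, by omega⟩
    have hsplit : ∑ i ∈ A, a i + ∑ i ∈ Aᶜ, a i = ∑ i, a i := Finset.sum_add_sum_compl A (fun i => a i)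
    have hcardA : A.card ≤ ∑ i ∈ A, a i := by
      calc A.card = ∑ i ∈ A, 1 := by simp
        _ ≤ ∑ i ∈ A, a i := Finset.sum_le_sum fun i _ => hone i
    have hsubA : ∑ i ∈ A, (a i - 1) + A.card = ∑ i ∈ A, a i := by
      have : ∑ i ∈ A, (a i - 1 + 1) = ∑ i ∈ A, a i :=
        Finset.sum_congr rfl fun i _ => by have := hone i; omega
      rw [Finset.sum_add_distrib, Finset.sum_const, smul_eq_mul, mul_one] at this
      exact this
    have hb : t ≤ ∑ i, (if i ∈ A then a i - 1 else 0) := by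
      have hifsum : ∑ i, (if i ∈ A then a i - 1 else 0) = ∑ i ∈ A, (a i - 1) := by
        rw [← Finset.sum_add_sum_compl A fun i => if i ∈ A then a i - 1 else 0,
          Finset.sum_congr rfl (fun i hi => if_pos hi),
          Finset.sum_congr rfl (fun i hi => if_neg (Finset.mem_compl.mp hi)),
          Finset.sum_const, smul_eq_mul, mul_zero, add_zero]
      rw [hifsum]
      omega
    obtain ⟨s, hsle, hssum⟩ := Stmt17Aux.exists_le_sum_eq _ t hb
    have hs0 : ∀ i, i ∉ A → s i = 0 := fun i hi => by
      have := hsle i; rw [if_neg hi] at this; omega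
    have hsA : ∀ i ∈ A, s i ≤ a i - 1 := fun i hi => by
      have := hsle i; rwa [if_pos hi] at this
    have hsAsum : ∑ i ∈ A, s i = t := by
      have h0 : ∑ i ∈ Aᶜ, s i = 0 :=
        Finset.sum_eq_zero fun i hi => hs0 i (Finset.mem_compl.mp hi)
      have := Finset.sum_add_sum_compl A s
      omega
    set V : Fin n →₀ ℕ :=
      Finsupp.equivFunOnFinite.symm (fun i => if i ∈ A then s i else a i) with hV
    have hVapp : ∀ i, V i = if i ∈ A then s i else a i := fun i => rfl
    have hminV : ∀ k, min (V k) (a k) = if k ∈ A then s k else a k := by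
      intro k
      rw [hVapp]
      by_cases hk : k ∈ A
      · simp only [if_pos hk]
        have := hsA k hk; have := hone k; omega
      · simp only [if_neg hk, min_self]
    have hSV : ∑ k, min (V k) (a k) = d - 1 := by
      rw [Finset.sum_congr rfl fun k _ => hminV k,
        ← Finset.sum_add_sum_compl A fun k => if k ∈ A then s k else a k,
        Finset.sum_congr rfl (fun i hi => if_pos hi),
        Finset.sum_congr rfl (fun i hi => if_neg (Finset.mem_compl.mp hi)), hsAsum]
      exact ht
    refine isAssociatedPrime_iff.mpr ⟨Stmt17Aux.PF_prime A, Ideal.Quotient.mk _ (monomial V (1 : K)), ?_⟩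
    ext r
    rw [Submodule.mem_colon_singleton, Submodule.mem_bot, Stmt17Aux.smul_mk,
      Ideal.Quotient.eq_zero_iff_mem]
    constructor
    · intro hr
      refine Submodule.span_induction ?_ ?_ ?_ ?_ hr
      · rintro _ ⟨i, hi, rfl⟩
        rw [show (X i : MvPolynomial (Fin n) K) * monomial V 1
            = monomial (Finsupp.single i 1 + V) 1 by
          rw [show (X i : MvPolynomial (Fin n) K) = monomial (Finsupp.single i 1) 1 from rfl,
            monomial_mul, one_mul]]
        rw [Stmt17Aux.monomial_mem_vero]
        have hi' : i ∈ A := hi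
        have hpt : ∀ k, min (((Finsupp.single i 1 + V : Fin n →₀ ℕ)) k) (a k)
            = min (V k) (a k) + (if k = i then 1 else 0) := by
          intro k
          by_cases hk : k = i
          · subst hk
            rw [Finsupp.add_apply, Finsupp.single_eq_same, if_pos rfl, hVapp, if_pos hi']
            have h1 := hsA k hi'; have h2 := hone k
            omega
          · rw [Finsupp.add_apply, Finsupp.single_eq_of_ne hk, zero_add,
              if_neg hk, add_zero]
        rw [Finset.sum_congr rfl fun k _ => hpt k, Finset.sum_add_distrib,
          Finset.sum_ite_eq' Finset.univ i fun _ => 1, if_pos (Finset.mem_univ i), hSV]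
        omega
      · simp
      · intro p q _ _ hp hq
        rw [add_mul]
        exact Ideal.add_mem _ hp hq
      · intro c p _ hp
        rw [smul_eq_mul, mul_assoc]
        exact Ideal.mul_mem_left _ c hp
    · intro hr
      by_contra hrP
      rw [Stmt17Aux.mem_PF_iff] at hrP
      push_neg at hrP
      obtain ⟨u, hu, hui⟩ := hrP
      have hsup : u + V ∈ (r * monomial V (1 : K)).support := by
        rw [mem_support_iff, coeff_mul_monomial, mul_one]
        exact mem_support_iff.mp hu
      have hdle := (Stmt17Aux.mem_vero_iff d a _).mp hr _ hsup
      have hcalc : ∀ k, min ((u + V) k) (a k) = min (V k) (a k) := by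
        intro k
        rw [Finsupp.add_apply, hVapp]
        by_cases hk : k ∈ A
        · rw [hui k hk, zero_add]
        · simp only [if_neg hk]; omega
      rw [Finset.sum_congr rfl fun k _ => hcalc k, hSV] at hdle
      omega
end

section
/- Let I = I_{d;a_1,…,a_n} be a Veronese type ideal with 1 < d < Σ a_i and all a_i ≥ 1, and let A ⊆ [n] be nonempty with Σ_{i ∉ A} a_i ≤ d - 1. Then the smallest integer k ≥ 1 such that P_A ∈ Ass(S/I^k) equals ⌈(|A| - 1)/(Σ_{i=1}^n a_i - d)⌉ when |A| ≥ 2, and equals 1 when |A| = 1. In particular the maximal ideal (x_1,…,x_n) lies in Ass(S/I^k) exactly for k ≥ ⌈(n-1)/(Σ a_i - d)⌉. -/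
open MvPolynomial

/-- Sandwich lemma: an integer-valued function with prescribed sum between bounds. -/
lemma sandwich {ι : Type*} (s : Finset ι) (f g : ι → ℕ) (t : ℕ)
    (hfg : ∀ i ∈ s, f i ≤ g i) (hf : ∑ i ∈ s, f i ≤ t) (hg : t ≤ ∑ i ∈ s, g i) :
    ∃ h : ι → ℕ, (∀ i ∈ s, f i ≤ h i ∧ h i ≤ g i) ∧ ∑ i ∈ s, h i = t := by
  classical
  induction s using Finset.cons_induction generalizing t with
  | empty =>
      simp only [Finset.sum_empty] at hf hg
      exact ⟨f, fun i hi => absurd hi (Finset.notMem_empty i), by simp; omega⟩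
  | cons i s hi ih =>
      rw [Finset.sum_cons] at hf hg
      have hfgi : f i ≤ g i := hfg i (Finset.mem_cons_self i s)
      have hfs : ∀ j ∈ s, f j ≤ g j := fun j hj => hfg j (Finset.mem_cons_of_mem hj)
      have hFG : ∑ j ∈ s, f j ≤ ∑ j ∈ s, g j := Finset.sum_le_sum hfs
      set c := max (f i) (t - ∑ j ∈ s, g j) with hcdef
      have hc1 : f i ≤ c := le_max_left _ _
      have hc1' : t - ∑ j ∈ s, g j ≤ c := le_max_right _ _
      have hc2 : c ≤ g i := max_le hfgi (by omega)
      have hcle : c ≤ t - ∑ j ∈ s, f j := max_le (by omega) (by omega)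
      have hc3 : ∑ j ∈ s, f j ≤ t - c := by omega
      have hc4 : t - c ≤ ∑ j ∈ s, g j := by omega
      have hc5 : c ≤ t := by omega
      obtain ⟨h, hh1, hh2⟩ := ih (t - c) hfs hc3 hc4
      refine ⟨Function.update h i c, ?_, ?_⟩
      · intro j hj
        rcases Finset.mem_cons.mp hj with rfl | hj
        · rw [Function.update_self]; exact ⟨hc1, hc2⟩
        · rw [Function.update_of_ne (fun hji : _ = i => hi (hji ▸ hj))]
          exact hh1 j hj
      · rw [Finset.sum_cons, Function.update_self]
        have hs : ∑ x ∈ s, Function.update h i c x = ∑ x ∈ s, h x :=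
          Finset.sum_congr rfl fun j hj => Function.update_of_ne (fun hji : _ = i => hi (hji ▸ hj)) _ _
        rw [hs, hh2]
        omega

lemma mem_vero_iff {K : Type} [Field K] {n : ℕ} {D : ℕ} {b : Fin n → ℕ}
    {p : MvPolynomial (Fin n) K} :
    p ∈ veroneseIdeal K D b ↔
      ∀ u ∈ p.support, ∃ v : Fin n →₀ ℕ, (∑ i, v i = D ∧ ∀ i, v i ≤ b i) ∧ v ≤ u := by
  rw [veroneseIdeal, mem_ideal_span_monomial_image]
  simp only [Set.mem_setOf_eq]

lemma vero_mul {K : Type} [Field K] {n : ℕ} (k d : ℕ) (a : Fin n → ℕ) :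
    veroneseIdeal K (k * d) (fun i => k * a i) * veroneseIdeal K d a
      = veroneseIdeal K ((k+1) * d) (fun i => (k+1) * a i) := by
  classical
  apply le_antisymm
  · rw [Ideal.mul_le]
    intro p hp q hq
    rw [mem_vero_iff] at hp hq ⊢
    intro u hu
    obtain ⟨u1, hu1, u2, hu2, huu⟩ := Finset.mem_add.mp (support_mul p q hu)
    obtain ⟨v1, ⟨hv1s, hv1b⟩, hv1le⟩ := hp u1 hu1
    obtain ⟨v2, ⟨hv2s, hv2b⟩, hv2le⟩ := hq u2 hu2
    refine ⟨v1 + v2, ⟨?_, ?_⟩, ?_⟩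
    · simp only [Finsupp.add_apply, Finset.sum_add_distrib, hv1s, hv2s]; ring
    · intro i
      have h1 := hv1b i
      have h2 := hv2b i
      have h3 : (k+1) * a i = k * a i + a i := by ring
      simp only [Finsupp.add_apply]
      omega
    · rw [← huu]; exact add_le_add hv1le hv2le
  · rw [veroneseIdeal, Ideal.span_le]
    rintro _ ⟨u, ⟨hus, hub⟩, rfl⟩
    rw [SetLike.mem_coe]
    show (monomial u (1:K)) ∈ (veroneseIdeal K (k * d) fun i => k * a i) * veroneseIdeal K d a
    have hsucc : ∀ x : ℕ, (k+1) * x = k * x + x := fun x => by ring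
    have key1 : ∀ i, (k+1) * (u i - a i) ≤ k * u i := by
      intro i
      have hubi := hub i
      rcases le_or_gt (u i) (a i) with h | h
      · simp [Nat.sub_eq_zero_of_le h]
      · have h1 : u i - a i ≤ k * a i := by have := hsucc (a i); omega
        have h2 : (u i - a i) + a i = u i := by omega
        calc (k+1) * (u i - a i) = k * (u i - a i) + (u i - a i) := by ring
        _ ≤ k * (u i - a i) + k * a i := by omega
        _ = k * ((u i - a i) + a i) := by ring
        _ = k * u i := by rw [h2]
    have key2 : ∀ i, k * u i ≤ (k+1) * min (u i) (k * a i) := by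
      intro i
      have hubi := hub i
      rcases le_or_gt (u i) (k * a i) with h | h
      · rw [min_eq_left h]
        have := hsucc (u i); omega
      · rw [min_eq_right h.le]
        calc k * u i ≤ k * ((k+1) * a i) := Nat.mul_le_mul_left _ hubi
        _ = (k+1) * (k * a i) := by ring
    have hsum1 : ∑ i, (u i - a i) ≤ k * d := by
      have h1 : (k+1) * ∑ i, (u i - a i) ≤ (k+1) * (k * d) := by
        rw [Finset.mul_sum]
        calc ∑ i, (k+1) * (u i - a i) ≤ ∑ i, k * u i :=
              Finset.sum_le_sum fun i _ => key1 i
        _ = k * ∑ i, u i := by rw [Finset.mul_sum]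
        _ = k * ((k+1) * d) := by rw [hus]
        _ = (k+1) * (k * d) := by ring
      exact Nat.le_of_mul_le_mul_left h1 (Nat.succ_pos k)
    have hsum2 : k * d ≤ ∑ i, min (u i) (k * a i) := by
      have h1 : (k+1) * (k * d) ≤ (k+1) * ∑ i, min (u i) (k * a i) := by
        rw [Finset.mul_sum]
        calc (k+1) * (k*d) = k * ((k+1) * d) := by ring
        _ = k * ∑ i, u i := by rw [hus]
        _ = ∑ i, k * u i := by rw [Finset.mul_sum]
        _ ≤ ∑ i, (k+1) * min (u i) (k * a i) := Finset.sum_le_sum fun i _ => key2 i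
      exact Nat.le_of_mul_le_mul_left h1 (Nat.succ_pos k)
    obtain ⟨h, hh1, hh2⟩ := sandwich Finset.univ (fun i => u i - a i)
      (fun i => min (u i) (k * a i)) (k * d)
      (fun i _ => by
        show u i - a i ≤ min (u i) (k * a i)
        have := hub i; have := hsucc (a i)
        exact le_min (by omega) (by omega))
      (by simpa using hsum1) (by simpa using hsum2)
    set v : Fin n →₀ ℕ := Finsupp.equivFunOnFinite.symm h with hvdef
    have hv : ∀ i, v i = h i := fun i => Finsupp.equivFunOnFinite_symm_apply_apply h i
    have hvle : ∀ i, v i ≤ u i := fun i => by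
      rw [hv]; exact le_trans (hh1 i (Finset.mem_univ i)).2 (min_le_left _ _)
    have hvsum : ∑ i, v i = k * d := by
      rw [Finset.sum_congr rfl fun i _ => hv i]; exact hh2
    have hvb : ∀ i, v i ≤ k * a i := fun i => by
      rw [hv]; exact le_trans (hh1 i (Finset.mem_univ i)).2 (min_le_right _ _)
    set w : Fin n →₀ ℕ := u - v with hwdef
    have hw : ∀ i, w i = u i - v i := fun i => Finsupp.tsub_apply u v i
    have hvw : v + w = u := by
      ext i
      rw [Finsupp.add_apply, hw]
      have := hvle i; omega
    have hwsum : ∑ i, w i = d := by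
      have h1 : ∑ i, (v i + w i) = ∑ i, u i := Finset.sum_congr rfl fun i _ => by
        rw [hw]; have := hvle i; omega
      rw [Finset.sum_add_distrib, hvsum, hus] at h1
      have := hsucc d; omega
    have hwb : ∀ i, w i ≤ a i := fun i => by
      have h1 := hh1 i (Finset.mem_univ i)
      rw [hw]
      have h2 : u i - a i ≤ v i := by rw [hv]; exact h1.1
      omega
    have hmono : (monomial u (1:K)) = monomial v 1 * monomial w 1 := by
      rw [monomial_mul, one_mul, hvw]
    rw [hmono]
    exact Ideal.mul_mem_mul
      (Ideal.subset_span ⟨v, ⟨hvsum, hvb⟩, rfl⟩)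
      (Ideal.subset_span ⟨w, ⟨hwsum, hwb⟩, rfl⟩)

lemma vero_pow {K : Type} [Field K] {n : ℕ} (k d : ℕ) (a : Fin n → ℕ) :
    (veroneseIdeal K d a) ^ k = veroneseIdeal K (k * d) (fun i => k * a i) := by
  induction k with
  | zero =>
      simp only [pow_zero, Nat.zero_mul, Nat.zero_mul]
      symm
      rw [Ideal.one_eq_top, Ideal.eq_top_iff_one]
      have h1 : (1 : MvPolynomial (Fin n) K) = monomial 0 1 := by
        rw [monomial_zero']; simp
      rw [h1]
      exact Ideal.subset_span ⟨0, by simp, rfl⟩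
  | succ k ih => rw [pow_succ, ih, vero_mul]

lemma mem_PF_iff {K : Type} [Field K] {n : ℕ} (A : Finset (Fin n))
    {p : MvPolynomial (Fin n) K} :
    p ∈ PF (K := K) A ↔ ∀ m ∈ p.support, ∃ i ∈ A, (m : Fin n →₀ ℕ) i ≠ 0 := by
  have : ((fun i => (X i : MvPolynomial (Fin n) K)) '' ↑A)
      = (X '' (↑A : Set (Fin n)) : Set (MvPolynomial (Fin n) K)) := rfl
  rw [PF, this, mem_ideal_span_X_image]
  simp

lemma PF_prime {K : Type} [Field K] {n : ℕ} (A : Finset (Fin n)) :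
    (PF (K := K) A).IsPrime := by
  classical
  set g : Fin n → MvPolynomial (Fin n) K := fun i => if i ∈ A then 0 else X i with hgdef
  have hker : PF (K := K) A = RingHom.ker (aeval (R := K) g) := by
    apply le_antisymm
    · rw [PF, Ideal.span_le]
      rintro _ ⟨i, hi, rfl⟩
      rw [SetLike.mem_coe, RingHom.mem_ker, aeval_X]
      simp only [Finset.mem_coe] at hi
      simp only [hgdef, if_pos hi]
    · intro p hp
      rw [RingHom.mem_ker] at hp
      rw [mem_PF_iff]
      intro m hm
      by_contra hcon
      push_neg at hcon
      apply mem_support_iff.mp hm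
      have hphi : ∀ (u : Fin n →₀ ℕ) (c : K),
          (aeval g) (monomial u c)
            = if (∀ i ∈ A, u i = 0) then monomial u c else 0 := by
        intro u c
        rw [aeval_monomial]
        split_ifs with hgood
        · have he : (u.prod fun i k => g i ^ k) = u.prod fun i k => X i ^ k := by
            apply Finsupp.prod_congr
            intro i hi
            have hiA : i ∉ A := fun h => (Finsupp.mem_support_iff.mp hi) (hgood i h)
            simp only [hgdef, if_neg hiA]
          rw [he, monomial_eq, algebraMap_eq]
        · push_neg at hgood
          obtain ⟨i, hiA, hiu⟩ := hgood
          have hmem : i ∈ u.support := Finsupp.mem_support_iff.mpr hiu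
          rw [Finsupp.prod, Finset.prod_eq_zero hmem, mul_zero]
          simp only [hgdef, if_pos hiA]
          exact zero_pow hiu
      have e1 : (aeval g) p
          = ∑ u ∈ p.support, if (∀ i ∈ A, u i = 0) then monomial u (coeff u p) else 0 := by
        conv_lhs => rw [p.as_sum]
        rw [map_sum]
        exact Finset.sum_congr rfl fun u _ => hphi u _
      have e2 := congrArg (coeff m) (e1.symm.trans hp)
      rw [coeff_sum, coeff_zero] at e2
      rw [← e2]
      rw [Finset.sum_eq_single m]
      · rw [if_pos hcon, coeff_monomial, if_pos rfl]
      · intro u hu hum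
        split_ifs with h
        · rw [coeff_monomial, if_neg hum]
        · exact coeff_zero m
      · intro hmm
        exact absurd hm hmm
  rw [hker]
  exact RingHom.ker_isPrime _

lemma mem_ass_iff {R : Type*} [CommRing R] [IsNoetherianRing R] (J P : Ideal R) :
    P ∈ associatedPrimes R (R ⧸ J) ↔ P.IsPrime ∧ ∃ f : R, ∀ r, r ∈ P ↔ r * f ∈ J := by
  rw [AssociatedPrimes.mem_iff, isAssociatedPrime_iff]
  refine and_congr_right fun hp => ?_
  have key : ∀ (f : R) (r : R),
      r ∈ Submodule.colon (⊥ : Submodule R (R ⧸ J)) {((Ideal.Quotient.mk J) f : R ⧸ J)} ↔ r * f ∈ J := by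
    intro f r
    rw [Submodule.mem_colon_singleton, Submodule.mem_bot, Algebra.smul_def,
      Ideal.Quotient.algebraMap_eq, ← map_mul, Ideal.Quotient.eq_zero_iff_mem]
  constructor
  · rintro ⟨x, hx⟩
    obtain ⟨f, rfl⟩ := Ideal.Quotient.mk_surjective x
    exact ⟨f, fun r => by rw [hx]; exact key f r⟩
  · rintro ⟨f, hf⟩
    refine ⟨Ideal.Quotient.mk J f, ?_⟩
    ext r
    rw [key f r]
    exact hf r

/-- Forward direction of the criterion. -/
lemma crit_fwd {K : Type} [Field K] {n : ℕ} (D : ℕ) (b : Fin n → ℕ) (A : Finset (Fin n))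
    (hA : A.Nonempty)
    (h : PF (K := K) A ∈ associatedPrimes (MvPolynomial (Fin n) K)
      (MvPolynomial (Fin n) K ⧸ veroneseIdeal K D b)) :
    D + A.card ≤ (∑ i, b i) + 1 := by
  classical
  rw [mem_ass_iff] at h
  obtain ⟨hprime, f, hf⟩ := h
  set J := veroneseIdeal K D b with hJdef
  have hfJ : f ∉ J := by
    intro hJ
    exact hprime.ne_top ((Ideal.eq_top_iff_one _).mpr ((hf 1).mpr (by rwa [one_mul])))
  have hsupp : f.support.Nonempty := by
    rw [Finset.nonempty_iff_ne_empty]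
    intro h0
    exact hfJ (by rw [support_eq_empty.mp h0]; exact Ideal.zero_mem _)
  set Q : (Fin n →₀ ℕ) → Ideal (MvPolynomial (Fin n) K) :=
    fun w => J.colon (Ideal.span {monomial w (1:K)}) with hQdef
  have hmonX : ∀ (i : Fin n) (w : Fin n →₀ ℕ),
      (X i : MvPolynomial (Fin n) K) * monomial w 1 = monomial (w + Finsupp.single i 1) 1 := by
    intro i w
    rw [X, monomial_mul, one_mul, add_comm]
  have hPQ : ∀ w ∈ f.support, PF (K := K) A ≤ Q w := by
    intro w hw
    rw [PF, Ideal.span_le]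
    rintro _ ⟨i, hiA, rfl⟩
    simp only [Finset.mem_coe] at hiA
    rw [SetLike.mem_coe, hQdef]
    rw [Ideal.mem_colon_span_singleton]
    have hXf : (X i : MvPolynomial (Fin n) K) * f ∈ J :=
      (hf (X i)).mp (Ideal.subset_span ⟨i, hiA, rfl⟩)
    rw [hJdef, mem_vero_iff] at hXf ⊢
    rw [hmonX i w]
    intro u hu
    rw [support_monomial, if_neg one_ne_zero, Finset.mem_singleton] at hu
    subst hu
    apply hXf
    rw [mem_support_iff]
    have hco : coeff (w + Finsupp.single i 1) ((X i : MvPolynomial (Fin n) K) * f)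
        = coeff w f := by
      rw [show (X i : MvPolynomial (Fin n) K) * f = f * monomial (Finsupp.single i 1) 1 from by
        rw [X, mul_comm]]
      rw [coeff_mul_monomial, mul_one]
    rw [hco]
    exact mem_support_iff.mp hw
  have hQP : (∏ w ∈ f.support, Q w) ≤ PF (K := K) A := by
    refine le_trans Ideal.prod_le_inf ?_
    intro r hr
    rw [Submodule.mem_finsetInf] at hr
    apply (hf r).mpr
    have hrf : r * f = ∑ w ∈ f.support, C (coeff w f) * (r * monomial w 1) := by
      conv_lhs => rw [f.as_sum]
      rw [Finset.mul_sum]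
      refine Finset.sum_congr rfl fun w _ => ?_
      have : (monomial w (coeff w f) : MvPolynomial (Fin n) K)
          = C (coeff w f) * monomial w 1 := by
        rw [C_mul_monomial, mul_one]
      rw [this]; ring
    rw [hrf]
    exact Ideal.sum_mem _ fun w hw =>
      Ideal.mul_mem_left _ _ (Ideal.mem_colon_span_singleton.mp (hr w hw))
  obtain ⟨m, hmsupp, hQle⟩ := (hprime.prod_le).mp hQP
  have hPm : ∀ r, r ∈ PF (K := K) A ↔ r * monomial m (1:K) ∈ J := by
    intro r
    constructor
    · exact fun hr => Ideal.mem_colon_span_singleton.mp (hPQ m hmsupp hr)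
    · exact fun hr => hQle (Ideal.mem_colon_span_singleton.mpr hr)
  have hnotm : ¬ ∃ v : Fin n →₀ ℕ, (∑ i, v i = D ∧ ∀ i, v i ≤ b i) ∧ v ≤ m := by
    rintro ⟨v, hv1, hv2⟩
    apply hprime.ne_top
    rw [Ideal.eq_top_iff_one]
    apply (hPm 1).mpr
    rw [one_mul, hJdef, mem_vero_iff]
    intro u hu
    rw [support_monomial, if_neg one_ne_zero, Finset.mem_singleton] at hu
    subst hu
    exact ⟨v, hv1, hv2⟩
  have hstep : ∀ i ∈ A, ∃ v : Fin n →₀ ℕ,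
      (∑ j, v j = D ∧ ∀ j, v j ≤ b j) ∧ v ≤ m + Finsupp.single i 1 := by
    intro i hi
    have hXi : (X i : MvPolynomial (Fin n) K) ∈ PF (K := K) A :=
      Ideal.subset_span ⟨i, hi, rfl⟩
    have hXm := (hPm (X i)).mp hXi
    rw [hmonX i m, hJdef, mem_vero_iff] at hXm
    exact hXm _ (by rw [support_monomial, if_neg one_ne_zero]; exact Finset.mem_singleton_self _)
  have hbm : ∀ i ∈ A, m i + 1 ≤ b i := by
    intro i hi
    obtain ⟨v, ⟨hv1, hv2⟩, hv3⟩ := hstep i hi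
    rcases le_or_gt (v i) (m i) with hle | hlt
    · exfalso
      apply hnotm
      refine ⟨v, ⟨hv1, hv2⟩, Finsupp.le_def.mpr fun j => ?_⟩
      have h1 := Finsupp.le_def.mp hv3 j
      simp only [Finsupp.add_apply, Finsupp.single_apply] at h1
      by_cases hj : i = j
      · subst hj; exact hle
      · rw [if_neg hj] at h1; omega
    · have := hv2 i; omega
  obtain ⟨i0, hi0⟩ := hA
  obtain ⟨v, ⟨hv1, hv2⟩, hv3⟩ := hstep i0 hi0
  set c : Fin n → ℕ := fun i => if i ∈ A.erase i0 then b i - 1 else b i with hcdef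
  have hvc : ∀ i, v i ≤ c i := by
    intro i
    by_cases hie : i ∈ A.erase i0
    · have hiA := Finset.mem_of_mem_erase hie
      have hne : i ≠ i0 := Finset.ne_of_mem_erase hie
      have h1 := Finsupp.le_def.mp hv3 i
      simp only [Finsupp.add_apply, Finsupp.single_apply,
        if_neg (fun hq : i0 = i => hne hq.symm)] at h1
      have h2 := hbm i hiA
      simp only [hcdef, if_pos hie]
      omega
    · simp only [hcdef, if_neg hie]
      exact hv2 i
  have hsum : D ≤ ∑ i, c i := by
    rw [← hv1]
    exact Finset.sum_le_sum fun i _ => hvc i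
  have hcard1 : 1 ≤ A.card := Finset.card_pos.mpr ⟨i0, hi0⟩
  have hcsum : ∑ i, c i + (A.card - 1) = ∑ i, b i := by
    have h1 : ∀ i, c i + (if i ∈ A.erase i0 then 1 else 0) = b i := by
      intro i
      by_cases hie : i ∈ A.erase i0
      · have := hbm i (Finset.mem_of_mem_erase hie)
        simp only [hcdef, if_pos hie]
        omega
      · simp only [hcdef, if_neg hie]; omega
    have h2 : ∑ i, (c i + (if i ∈ A.erase i0 then 1 else 0)) = ∑ i, b i :=
      Finset.sum_congr rfl fun i _ => h1 i
    rw [Finset.sum_add_distrib] at h2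
    have h3 : ∑ i, (if i ∈ A.erase i0 then (1:ℕ) else 0) = (A.erase i0).card := by
      rw [Finset.sum_ite_mem, Finset.univ_inter, Finset.card_eq_sum_ones]
    rw [h3, Finset.card_erase_of_mem hi0] at h2
    exact h2
  omega

/-- Backward direction of the criterion. -/
lemma crit_back {K : Type} [Field K] {n : ℕ} (D : ℕ) (b : Fin n → ℕ) (A : Finset (Fin n))
    (hbA : ∀ i ∈ A, 1 ≤ b i) (h2 : ∑ i ∈ Aᶜ, b i + 1 ≤ D)
    (h3 : D + A.card ≤ (∑ i, b i) + 1) :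
    PF (K := K) A ∈ associatedPrimes (MvPolynomial (Fin n) K)
      (MvPolynomial (Fin n) K ⧸ veroneseIdeal K D b) := by
  classical
  have hsplit : ∑ i ∈ A, b i + ∑ i ∈ Aᶜ, b i = ∑ i, b i := Finset.sum_add_sum_compl A b
  have hAcard : A.card + ∑ i ∈ A, (b i - 1) = ∑ i ∈ A, b i := by
    have h1 : ∑ i ∈ A, b i = ∑ i ∈ A, (1 + (b i - 1)) :=
      Finset.sum_congr rfl fun i hi => by have := hbA i hi; omega
    rw [h1, Finset.sum_add_distrib, Finset.sum_const, smul_eq_mul, mul_one]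
  obtain ⟨h, hh1, hh2⟩ := sandwich A (fun _ => 0) (fun i => b i - 1)
    (D - 1 - ∑ i ∈ Aᶜ, b i) (fun i _ => Nat.zero_le _) (by simp)
    (by show D - 1 - ∑ i ∈ Aᶜ, b i ≤ ∑ i ∈ A, (b i - 1); omega)
  set mf : Fin n → ℕ := fun i => if i ∈ A then h i else b i with hmfdef
  set m : Fin n →₀ ℕ := Finsupp.equivFunOnFinite.symm mf with hmdef
  have hm : ∀ i, m i = mf i := fun i => Finsupp.equivFunOnFinite_symm_apply_apply mf i
  have hmA : ∀ i ∈ A, m i + 1 ≤ b i := fun i hi => by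
    rw [hm]; simp only [hmfdef, if_pos hi]
    have := (hh1 i hi).2; have := hbA i hi; omega
  have hmC : ∀ i ∈ Aᶜ, m i = b i := fun i hi => by
    rw [hm]; simp only [hmfdef, if_neg (Finset.mem_compl.mp hi)]
  have hsA : ∑ i ∈ A, m i = D - 1 - ∑ i ∈ Aᶜ, b i := by
    have e : ∑ i ∈ A, m i = ∑ i ∈ A, h i :=
      Finset.sum_congr rfl fun i hi => by rw [hm]; simp only [hmfdef, if_pos hi]
    exact e.trans hh2
  have hsC : ∑ i ∈ Aᶜ, m i = ∑ i ∈ Aᶜ, b i := Finset.sum_congr rfl fun i hi => hmC i hi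
  have hs : ∑ i, m i = D - 1 := by
    rw [← Finset.sum_add_sum_compl A m, hsA, hsC]; omega
  rw [mem_ass_iff]
  refine ⟨PF_prime A, ⟨monomial m 1, fun r => ⟨?_, ?_⟩⟩⟩
  · intro hr
    have hcolon : PF (K := K) A ≤ (veroneseIdeal K D b).colon (Ideal.span {monomial m (1:K)}) := by
      rw [PF, Ideal.span_le]
      rintro _ ⟨i, hiA, rfl⟩
      simp only [Finset.mem_coe] at hiA
      rw [SetLike.mem_coe, Ideal.mem_colon_span_singleton]
      have hXm : (X i : MvPolynomial (Fin n) K) * monomial m 1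
          = monomial (m + Finsupp.single i 1) 1 := by
        rw [X, monomial_mul, one_mul, add_comm]
      rw [hXm, mem_vero_iff]
      intro u hu
      rw [support_monomial, if_neg one_ne_zero, Finset.mem_singleton] at hu
      subst hu
      refine ⟨m + Finsupp.single i 1, ⟨?_, ?_⟩, le_rfl⟩
      · have e2 : ∑ j, (Finsupp.single i 1 : Fin n →₀ ℕ) j = 1 := by
          simp [Finsupp.single_apply]
        calc ∑ j, (m + Finsupp.single i 1 : Fin n →₀ ℕ) j
            = ∑ j, (m j + (Finsupp.single i 1 : Fin n →₀ ℕ) j) :=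
              Finset.sum_congr rfl fun j _ => Finsupp.add_apply _ _ _
          _ = (∑ j, m j) + ∑ j, (Finsupp.single i 1 : Fin n →₀ ℕ) j :=
              Finset.sum_add_distrib
          _ = D := by rw [hs, e2]; omega
      · intro j
        simp only [Finsupp.add_apply, Finsupp.single_apply]
        by_cases hj : j ∈ A
        · have := hmA j hj
          split_ifs <;> omega
        · have h1 := hmC j (Finset.mem_compl.mpr hj)
          have h2 : ¬ (i = j) := fun hij => hj (hij ▸ hiA)
          rw [if_neg h2]; omega
    exact Ideal.mem_colon_span_singleton.mp (hcolon hr)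
  · intro hr
    rw [mem_PF_iff]
    intro w hw
    by_contra hcon
    push_neg at hcon
    rw [mem_vero_iff] at hr
    have hwm : (w + m) ∈ (r * monomial m (1:K)).support := by
      rw [mem_support_iff, coeff_mul_monomial, mul_one]
      exact mem_support_iff.mp hw
    obtain ⟨v, ⟨hvs, hvb⟩, hvle⟩ := hr (w + m) hwm
    have hA1 : ∑ i ∈ A, v i ≤ D - 1 - ∑ i ∈ Aᶜ, b i := by
      calc ∑ i ∈ A, v i ≤ ∑ i ∈ A, m i := Finset.sum_le_sum fun i hi => by
            have h1 := Finsupp.le_def.mp hvle i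
            have h2 := hcon i hi
            simp only [Finsupp.add_apply] at h1
            omega
      _ = _ := hsA
    have hA2 : ∑ i ∈ Aᶜ, v i ≤ ∑ i ∈ Aᶜ, b i := Finset.sum_le_sum fun i _ => hvb i
    have hDv : D = ∑ i ∈ A, v i + ∑ i ∈ Aᶜ, v i := by
      rw [Finset.sum_add_sum_compl A v, hvs]
    omega

/-- For a Veronese type ideal `I = I_{d;a_1,…,a_n}` with `1 < d < Σ aᵢ`, all `aᵢ ≥ 1`, and a
nonempty `A ⊆ [n]` with `Σ_{i ∉ A} aᵢ ≤ d - 1`: the least `k ≥ 1` with `P_A ∈ Ass(S/I^k)`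
is `⌈(|A| - 1)/(Σ aᵢ - d)⌉` if `|A| ≥ 2`, and `1` if `|A| = 1`. In particular, for `k ≥ 1`,
the maximal ideal lies in `Ass(S/I^k)` exactly when `k ≥ ⌈(n - 1)/(Σ aᵢ - d)⌉`. -/
theorem stmt19 {K : Type} [Field K] {n : ℕ} (d : ℕ) (a : Fin n → ℕ)
    (hd : 1 < d) (hlt : d < ∑ i, a i) (hone : ∀ i, 1 ≤ a i)
    (A : Finset (Fin n)) (hA : A.Nonempty) (hAa : ∑ i ∈ Aᶜ, a i ≤ d - 1) :
    IsLeast {k : ℕ | 1 ≤ k ∧ PF (K := K) A ∈ associatedPrimes (MvPolynomial (Fin n) K)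
        (MvPolynomial (Fin n) K ⧸ (veroneseIdeal K d a) ^ k)}
      (if A.card = 1 then 1 else (A.card - 1) ⌈/⌉ (∑ i, a i - d)) ∧
    ∀ k : ℕ, 1 ≤ k →
      (Ideal.span (Set.range (X : Fin n → MvPolynomial (Fin n) K)) ∈
          associatedPrimes (MvPolynomial (Fin n) K)
            (MvPolynomial (Fin n) K ⧸ (veroneseIdeal K d a) ^ k) ↔
        (n - 1) ⌈/⌉ (∑ i, a i - d) ≤ k) := by
  classical
  have hn : 0 < n := hA.choose.pos
  have hpos : 0 < ∑ i, a i - d := by omega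
  have crit : ∀ (B : Finset (Fin n)), B.Nonempty → (∑ i ∈ Bᶜ, a i ≤ d - 1) → ∀ k : ℕ, 1 ≤ k →
      (PF (K := K) B ∈ associatedPrimes (MvPolynomial (Fin n) K)
        (MvPolynomial (Fin n) K ⧸ (veroneseIdeal K d a) ^ k) ↔
          k * d + B.card ≤ k * ∑ i, a i + 1) := by
    intro B hB hBa k hk
    rw [vero_pow]
    have hmulsum : ∑ i, k * a i = k * ∑ i, a i := by rw [Finset.mul_sum]
    constructor
    · intro h
      have := crit_fwd (k * d) (fun i => k * a i) B hB h
      rwa [hmulsum] at this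
    · intro h
      apply crit_back
      · exact fun i _ => Nat.mul_pos hk (hone i)
      · have e1 : ∑ i ∈ Bᶜ, k * a i = k * ∑ i ∈ Bᶜ, a i := by rw [Finset.mul_sum]
        have e2 : k * ∑ i ∈ Bᶜ, a i ≤ k * (d - 1) := Nat.mul_le_mul_left k hBa
        have e3 : k * (d - 1) + k = k * d := by
          have h4 : d - 1 + 1 = d := by omega
          calc k * (d - 1) + k = k * (d - 1 + 1) := by ring
          _ = k * d := by rw [h4]
        omega
      · rwa [hmulsum]
  have hkey : ∀ (k cN : ℕ), 1 ≤ cN →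
      (cN - 1 ≤ (∑ i, a i - d) * k ↔ k * d + cN ≤ k * ∑ i, a i + 1) := by
    intro k cN hcN
    have e : k * ∑ i, a i = k * d + k * (∑ i, a i - d) := by
      have h4 : d + (∑ i, a i - d) = ∑ i, a i := by omega
      calc k * ∑ i, a i = k * (d + (∑ i, a i - d)) := by rw [h4]
      _ = k * d + k * (∑ i, a i - d) := by ring
    have e2 : (∑ i, a i - d) * k = k * (∑ i, a i - d) := Nat.mul_comm _ _
    omega
  constructor
  · by_cases hc : A.card = 1
    · rw [if_pos hc]
      refine ⟨⟨le_rfl, ?_⟩, fun k hk => hk.1⟩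
      rw [crit A hA hAa 1 le_rfl, hc, one_mul, one_mul]
      omega
    · rw [if_neg hc]
      have hcard1 : 1 ≤ A.card := Finset.card_pos.mpr hA
      constructor
      · have hc1 : 1 ≤ (A.card - 1) ⌈/⌉ (∑ i, a i - d) := by
          by_contra h0
          have h1 : (A.card - 1) ⌈/⌉ (∑ i, a i - d) ≤ 0 := by omega
          have h2 := (ceilDiv_le_iff_le_mul hpos).mp h1
          omega
        refine ⟨hc1, ?_⟩
        rw [crit A hA hAa _ hc1, ← hkey _ _ hcard1]
        exact (ceilDiv_le_iff_le_mul hpos).mp le_rfl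
      · rintro k ⟨hk1, hk2⟩
        rw [crit A hA hAa k hk1] at hk2
        exact (ceilDiv_le_iff_le_mul hpos).mpr ((hkey k _ hcard1).mpr hk2)
  · intro k hk
    have huniv : Ideal.span (Set.range (X : Fin n → MvPolynomial (Fin n) K))
        = PF (K := K) (Finset.univ) := by
      rw [PF, Finset.coe_univ, Set.image_univ]
    have hu1 : (Finset.univ : Finset (Fin n)).Nonempty := ⟨hA.choose, Finset.mem_univ _⟩
    have hu2 : ∑ i ∈ (Finset.univ : Finset (Fin n))ᶜ, a i ≤ d - 1 := by
      rw [Finset.compl_univ, Finset.sum_empty]; omega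
    rw [huniv, crit Finset.univ hu1 hu2 k hk, Finset.card_univ, Fintype.card_fin,
      ceilDiv_le_iff_le_mul hpos]
    exact (hkey k n hn).symm
end
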